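/- Let k be a field, fix a total order on monomials of k[T_1,…,T_m] refining divisibility (a monomial order), and let P_1,…,P_l be polynomials whose leading monomials lm(P_1),…,lm(P_l) are algebraically independent over k. Then P_1,…,P_l are algebraically independent over k. -/

import Mathlib

open MvPolynomial

section Aux

variable {k : Type*} [Field k] {m : ℕ}
variable (le : (Fin m →₀ ℕ) → (Fin m →₀ ℕ) → Prop) [IsLinearOrder _ le]

/-- existence of a maximum of a nonempty finite set with respect to a relation. -/
theorem AuxLM.exists_max {α : Type*} (f : α → (Fin m →₀ ℕ)) (s : Finset α)
    (hs : s.Nonempty) : ∃ a ∈ s, ∀ b ∈ s, le (f b) (f a) := by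
  classical
  induction s using Finset.cons_induction with
  | empty => exact absurd hs (by simp)
  | cons a s ha ih =>
    rcases s.eq_empty_or_nonempty with rfl | hs'
    · refine ⟨a, by simp, ?_⟩
      intro b hb
      simp only [Finset.cons_empty, Finset.mem_singleton] at hb
      subst hb; exact refl_of le _
    · obtain ⟨b, hb, hbmax⟩ := ih hs'
      rcases total_of le (f a) (f b) with h | h
      · refine ⟨b, Finset.mem_cons_of_mem hb, ?_⟩
        intro c hc
        rcases Finset.mem_cons.mp hc with rfl | hc
        · exact h
        · exact hbmax c hc
      · refine ⟨a, Finset.mem_cons_self a s, ?_⟩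
        intro c hc
        rcases Finset.mem_cons.mp hc with rfl | hc
        · exact refl_of le _
        · exact trans_of le (hbmax c hc) h

theorem AuxLM.mul (hadd : ∀ a b c, le a b → le (a + c) (b + c))
    {f g : MvPolynomial (Fin m) k} {a b : Fin m →₀ ℕ}
    (hf : ∀ d ∈ f.support, le d a) (hg : ∀ d ∈ g.support, le d b) :
    (∀ d ∈ (f * g).support, le d (a + b)) ∧
      MvPolynomial.coeff (a + b) (f * g) =
        MvPolynomial.coeff a f * MvPolynomial.coeff b g := by
  classical
  have step : ∀ u v : Fin m →₀ ℕ, le u a → le v b → le (u + v) (a + b) := by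
    intro u v hu hv
    have h1 : le (u + v) (a + v) := hadd _ _ _ hu
    have h2 : le (a + v) (a + b) := by
      have := hadd v b a hv
      simpa [add_comm] using this
    exact trans_of le h1 h2
  have key2 : ∀ u v : Fin m →₀ ℕ, u ∈ f.support → v ∈ g.support → u + v = a + b →
      u = a ∧ v = b := by
    intro u v hu hv huv
    have h1 : le (u + v) (a + v) := hadd _ _ _ (hf u hu)
    have h2 : le (a + v) (a + b) := by
      have := hadd v b a (hg v hv)
      simpa [add_comm] using this
    have hav : a + v = a + b := antisymm_of le h2 (huv ▸ h1)
    have hvb : v = b := add_left_cancel hav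
    refine ⟨?_, hvb⟩
    have : u + v = a + v := by rw [huv, hvb]
    exact add_right_cancel this
  constructor
  · intro d hd
    have hd' := MvPolynomial.support_mul f g hd
    rw [Finset.mem_add] at hd'
    obtain ⟨u, hu, v, hv, rfl⟩ := hd'
    exact step u v (hf u hu) (hg v hv)
  · rw [MvPolynomial.coeff_mul]
    rw [Finset.sum_eq_single_of_mem (a, b) (Finset.HasAntidiagonal.mem_antidiagonal.mpr rfl)]
    intro x hx hxab
    by_contra hne
    have h1 : x.1 ∈ f.support := by
      rw [MvPolynomial.mem_support_iff]
      intro h; apply hne; rw [h, zero_mul]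
    have h2 : x.2 ∈ g.support := by
      rw [MvPolynomial.mem_support_iff]
      intro h; apply hne; rw [h, mul_zero]
    obtain ⟨e1, e2⟩ := key2 x.1 x.2 h1 h2 (Finset.HasAntidiagonal.mem_antidiagonal.mp hx)
    exact hxab (Prod.ext e1 e2)

theorem AuxLM.pow (hadd : ∀ a b c, le a b → le (a + c) (b + c)) (hzero : ∀ a, le 0 a)
    {f : MvPolynomial (Fin m) k} {a : Fin m →₀ ℕ}
    (hf : ∀ d ∈ f.support, le d a) (n : ℕ) :
    (∀ d ∈ (f ^ n).support, le d (n • a)) ∧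
      MvPolynomial.coeff (n • a) (f ^ n) = MvPolynomial.coeff a f ^ n := by
  induction n with
  | zero =>
    constructor
    · intro d hd
      simp only [pow_zero, zero_smul]
      have : d = 0 := by
        rw [pow_zero, MvPolynomial.mem_support_iff, MvPolynomial.coeff_one] at hd
        by_contra h
        simp [Ne.symm h] at hd
      exact this ▸ hzero 0
    · simp
  | succ n ih =>
    have h := AuxLM.mul le hadd (f := f) (g := f ^ n) hf ih.1
    constructor
    · intro d hd
      rw [succ_nsmul, add_comm]
      exact h.1 d (by rw [pow_succ'] at hd; exact hd)
    · rw [succ_nsmul, add_comm, pow_succ', h.2, ih.2, pow_succ, mul_comm]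

theorem AuxLM.prodlm (hadd : ∀ a b c, le a b → le (a + c) (b + c)) (hzero : ∀ a, le 0 a)
    {l : ℕ} (P : Fin l → MvPolynomial (Fin m) k) (lm : Fin l → (Fin m →₀ ℕ))
    (hmax : ∀ i, ∀ d ∈ (P i).support, le d (lm i)) (α : Fin l →₀ ℕ) :
    (∀ d ∈ (α.prod fun i n => P i ^ n).support, le d (α.sum fun i n => n • lm i)) ∧
      MvPolynomial.coeff (α.sum fun i n => n • lm i) (α.prod fun i n => P i ^ n) =
        α.prod fun i n => MvPolynomial.coeff (lm i) (P i) ^ n := by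
  classical
  induction α using Finsupp.induction with
  | zero =>
    rw [Finsupp.prod_zero_index, Finsupp.sum_zero_index, Finsupp.prod_zero_index]
    constructor
    · intro d hd
      have : d = 0 := by
        rw [MvPolynomial.mem_support_iff, MvPolynomial.coeff_one] at hd
        by_contra h
        simp [Ne.symm h] at hd
      exact this ▸ hzero 0
    · simp
  | single_add a b f haf hb ih =>
    have hsum : ((Finsupp.single a b + f).sum fun i n => n • lm i)
        = b • lm a + (f.sum fun i n => n • lm i) := by
      rw [Finsupp.sum_add_index' (fun i => zero_smul ℕ (lm i)) (fun i x y => add_smul x y (lm i)),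
        Finsupp.sum_single_index (zero_smul ℕ (lm a))]
    have hprod : ((Finsupp.single a b + f).prod fun i n => P i ^ n)
        = P a ^ b * (f.prod fun i n => P i ^ n) := by
      rw [Finsupp.prod_add_index' (fun i => pow_zero (P i)) (fun i x y => pow_add (P i) x y),
        Finsupp.prod_single_index (h := fun i n => P i ^ n) (pow_zero (P a))]
    have hprodc : ((Finsupp.single a b + f).prod fun i n =>
          MvPolynomial.coeff (lm i) (P i) ^ n)
        = MvPolynomial.coeff (lm a) (P a) ^ b
            * (f.prod fun i n => MvPolynomial.coeff (lm i) (P i) ^ n) := by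
      rw [Finsupp.prod_add_index' (fun i => pow_zero _) (fun i x y => pow_add _ x y),
        Finsupp.prod_single_index
          (h := fun i n => MvPolynomial.coeff (lm i) (P i) ^ n) (pow_zero _)]
    have hpow := AuxLM.pow le hadd hzero (hmax a) b
    have hmul := AuxLM.mul le hadd hpow.1 ih.1
    rw [hsum, hprod, hprodc]
    exact ⟨hmul.1, by rw [hmul.2, hpow.2, ih.2]⟩

end Aux

/-- if the leading monomials (with respect to a monomial order,
i.e. a linear order on exponent vectors which is compatible with addition and
has `0` as least element) of polynomials `P_1,…,P_l` are algebraically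
independent over the field `k`, then so are `P_1,…,P_l`. -/
theorem algebraicIndependent_of_leadingMonomials
    {k : Type*} [Field k] {m l : ℕ}
    (le : (Fin m →₀ ℕ) → (Fin m →₀ ℕ) → Prop) [IsLinearOrder _ le]
    (hadd : ∀ a b c, le a b → le (a + c) (b + c))
    (hzero : ∀ a, le 0 a)
    (P : Fin l → MvPolynomial (Fin m) k)
    (lm : Fin l → (Fin m →₀ ℕ))
    (hmem : ∀ i, lm i ∈ (P i).support)
    (hmax : ∀ i, ∀ d ∈ (P i).support, le d (lm i))
    (hind : AlgebraicIndependent k fun i => (MvPolynomial.monomial (lm i) (1 : k))) :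
    AlgebraicIndependent k P := by
  classical
  rw [algebraicIndependent_iff]
  intro Q hQ
  by_contra hQ0
  set L : (Fin l →₀ ℕ) → (Fin m →₀ ℕ) := fun α => α.sum fun i n => n • lm i with hL
  -- aeval of a monomial at the family of monomials
  have hmono : ∀ α : Fin l →₀ ℕ,
      (MvPolynomial.aeval fun i => MvPolynomial.monomial (lm i) (1 : k))
        (MvPolynomial.monomial α (1 : k)) = MvPolynomial.monomial (L α) 1 := by
    intro α
    rw [MvPolynomial.aeval_monomial, map_one, one_mul]
    induction α using Finsupp.induction with
    | zero =>
      rw [Finsupp.prod_zero_index]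
      simp [hL]
    | single_add a b f haf hb ih =>
      have hs : L (Finsupp.single a b + f) = b • lm a + L f := by
        show ((Finsupp.single a b + f).sum fun i n => n • lm i) = _
        rw [Finsupp.sum_add_index' (fun i => zero_smul ℕ (lm i))
          (fun i x y => add_smul x y (lm i)), Finsupp.sum_single_index (zero_smul ℕ (lm a))]
      have hp : ((Finsupp.single a b + f).prod fun i n =>
            (MvPolynomial.monomial (lm i) (1 : k)) ^ n)
          = ((MvPolynomial.monomial (lm a) (1 : k)) ^ b)
              * (f.prod fun i n => (MvPolynomial.monomial (lm i) (1 : k)) ^ n) := by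
        rw [Finsupp.prod_add_index' (fun i => pow_zero _) (fun i x y => pow_add _ x y),
          Finsupp.prod_single_index
            (h := fun i n => (MvPolynomial.monomial (lm i) (1 : k)) ^ n) (pow_zero _)]
      rw [hp, ih, hs, MvPolynomial.monomial_pow, one_pow, MvPolynomial.monomial_mul, one_mul]
  -- injectivity of L
  have hLinj : Function.Injective L := by
    intro α β hab
    have h0 : (MvPolynomial.aeval fun i => MvPolynomial.monomial (lm i) (1 : k))
        (MvPolynomial.monomial α (1 : k) - MvPolynomial.monomial β (1 : k)) = 0 := by
      rw [map_sub, hmono, hmono, hab, sub_self]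
    have h1 := (algebraicIndependent_iff.mp hind) _ h0
    rw [sub_eq_zero] at h1
    rcases (MvPolynomial.monomial_eq_monomial_iff _ _ _ _).mp h1 with ⟨h, _⟩ | ⟨h, _⟩
    · exact h
    · exact absurd h one_ne_zero
  -- a maximal exponent of Q
  have hsupp : Q.support.Nonempty :=
    Finset.nonempty_iff_ne_empty.mpr (fun h => hQ0 (MvPolynomial.support_eq_empty.mp h))
  obtain ⟨α₀, hα₀, hα₀max⟩ := AuxLM.exists_max le L Q.support hsupp
  -- expand aeval P Q
  have hexp : (MvPolynomial.aeval P) Q = ∑ α ∈ Q.support,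
      MvPolynomial.C (MvPolynomial.coeff α Q) * (α.prod fun i n => P i ^ n) := by
    conv_lhs => rw [Q.as_sum, map_sum]
    refine Finset.sum_congr rfl fun α _ => ?_
    rw [MvPolynomial.aeval_monomial, MvPolynomial.algebraMap_eq]
  have hco : MvPolynomial.coeff (L α₀) ((MvPolynomial.aeval P) Q) = 0 := by
    rw [hQ, MvPolynomial.coeff_zero]
  rw [hexp, MvPolynomial.coeff_sum] at hco
  rw [Finset.sum_eq_single_of_mem α₀ hα₀ ?h] at hco
  case h =>
    intro α hα hne
    rw [MvPolynomial.coeff_C_mul]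
    have hz : MvPolynomial.coeff (L α₀) (α.prod fun i n => P i ^ n) = 0 := by
      by_contra hc
      have hmem' : L α₀ ∈ (α.prod fun i n => P i ^ n).support :=
        MvPolynomial.mem_support_iff.mpr hc
      have h1 : le (L α₀) (L α) :=
        (AuxLM.prodlm le hadd hzero P lm hmax α).1 _ hmem'
      have h2 : le (L α) (L α₀) := hα₀max α hα
      exact hne (hLinj (antisymm_of le h2 h1))
    rw [hz, mul_zero]
  rw [MvPolynomial.coeff_C_mul,
    show (L α₀) = (α₀.sum fun i n => n • lm i) from rfl,
    (AuxLM.prodlm le hadd hzero P lm hmax α₀).2] at hco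
  rcases mul_eq_zero.mp hco with h | h
  · exact MvPolynomial.mem_support_iff.mp hα₀ h
  · have : ∀ i ∈ α₀.support, MvPolynomial.coeff (lm i) (P i) ^ (α₀ i) ≠ 0 :=
      fun i _ => pow_ne_zero _ (MvPolynomial.mem_support_iff.mp (hmem i))
    exact (Finset.prod_ne_zero_iff.mpr this) h
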